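/- For every p ∈ (0,1), every real q ≥ 1, and all subsets Y, Y' ⊆ E, the ℓ-random-cluster weights w(F) = p^{|F|}·(1−p)^{|E|−|F|}·q^{κ−r(F)} satisfy the FKG lattice property: w(Y ∪ Y')·w(Y ∩ Y') ≥ w(Y)·w(Y'). -/

import Mathlib

open Finset

/-- The `ℓ`-random-cluster weights
`w(F) = p^{|F|} (1-p)^{|E|-|F|} q^{κ-r(F)}` satisfy the FKG lattice
property `w(Y ∪ Y') w(Y ∩ Y') ≥ w(Y) w(Y')` for `p ∈ (0,1)` and `q ≥ 1`. -/
theorem stmt_11 {K : Type*} [Field K] {E : Type*} [Fintype E] [DecidableEq E]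
    {V : Type*} [AddCommGroup V] [Module K V] [FiniteDimensional K V]
    (bdry : (E → K) →ₗ[K] V)
    (r : Finset E → ℕ)
    (hr : ∀ F : Finset E, r F = Module.finrank K (Submodule.span K
      ((fun σ => bdry (Pi.single σ 1)) '' (F : Set E))))
    (κ : ℕ) (hκ : r Finset.univ ≤ κ)
    (p q : ℝ) (hp : p ∈ Set.Ioo (0 : ℝ) 1) (hq : 1 ≤ q)
    (w : Finset E → ℝ)
    (hw : ∀ F : Finset E,
      w F = p ^ F.card * (1 - p) ^ (Fintype.card E - F.card) * q ^ (κ - r F))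
    (Y Y' : Finset E) :
    w Y * w Y' ≤ w (Y ∪ Y') * w (Y ∩ Y') := by
  obtain ⟨hp0, hp1⟩ := hp
  set f : E → V := fun σ => bdry (Pi.single σ 1) with hf
  have hmono : ∀ {A B : Finset E}, A ⊆ B → r A ≤ r B := by
    intro A B hAB
    rw [hr, hr]
    exact Submodule.finrank_mono
      (Submodule.span_mono (Set.image_mono (by exact_mod_cast hAB)))
  -- submodularity
  have hsub : r (Y ∪ Y') + r (Y ∩ Y') ≤ r Y + r Y' := by
    rw [hr, hr, hr, hr]
    set S := Submodule.span K (f '' (Y : Set E)) with hS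
    set T := Submodule.span K (f '' (Y' : Set E)) with hT
    have h1 : Submodule.span K (f '' ((Y ∪ Y' : Finset E) : Set E)) = S ⊔ T := by
      rw [Finset.coe_union, Set.image_union, Submodule.span_union]
    have h2 : Submodule.span K (f '' ((Y ∩ Y' : Finset E) : Set E)) ≤ S ⊓ T := by
      rw [Finset.coe_inter]
      refine le_inf ?_ ?_
      · exact Submodule.span_mono (Set.image_mono Set.inter_subset_left)
      · exact Submodule.span_mono (Set.image_mono Set.inter_subset_right)
    calc Module.finrank K (Submodule.span K (f '' ((Y ∪ Y' : Finset E) : Set E)))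
          + Module.finrank K (Submodule.span K (f '' ((Y ∩ Y' : Finset E) : Set E)))
        ≤ Module.finrank K (S ⊔ T : Submodule K V)
          + Module.finrank K (S ⊓ T : Submodule K V) := by
          rw [h1]; exact Nat.add_le_add_left (Submodule.finrank_mono h2) _
      _ = Module.finrank K S + Module.finrank K T := Submodule.finrank_sup_add_finrank_inf_eq S T
  have hrκ : ∀ F : Finset E, r F ≤ κ := fun F =>
    le_trans (hmono (Finset.subset_univ F)) hκ
  -- exponent inequalities / equalities
  have hcard : (Y ∪ Y').card + (Y ∩ Y').card = Y.card + Y'.card :=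
    Finset.card_union_add_card_inter Y Y'
  have hcle : ∀ F : Finset E, F.card ≤ Fintype.card E := fun F => Finset.card_le_univ F
  have hqexp : (κ - r Y) + (κ - r Y') ≤ (κ - r (Y ∪ Y')) + (κ - r (Y ∩ Y')) := by
    have := hrκ Y; have := hrκ Y'; have := hrκ (Y ∪ Y'); have := hrκ (Y ∩ Y')
    omega
  have h1pexp : (Fintype.card E - (Y ∪ Y').card) + (Fintype.card E - (Y ∩ Y').card)
      = (Fintype.card E - Y.card) + (Fintype.card E - Y'.card) := by
    have := hcle Y; have := hcle Y'; have := hcle (Y ∪ Y'); have := hcle (Y ∩ Y')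
    omega
  rw [hw, hw, hw, hw]
  have hple : (0:ℝ) ≤ p := le_of_lt hp0
  have h1ple : (0:ℝ) ≤ 1 - p := by linarith
  have hq0 : (0:ℝ) ≤ q := by linarith
  have key : w Y * w Y' = w Y * w Y' := rfl
  have lhs_eq : p ^ Y.card * (1 - p) ^ (Fintype.card E - Y.card) * q ^ (κ - r Y) *
      (p ^ Y'.card * (1 - p) ^ (Fintype.card E - Y'.card) * q ^ (κ - r Y'))
      = p ^ (Y.card + Y'.card) *
        (1 - p) ^ ((Fintype.card E - Y.card) + (Fintype.card E - Y'.card)) *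
        q ^ ((κ - r Y) + (κ - r Y')) := by
    rw [pow_add, pow_add, pow_add]; ring
  have rhs_eq : p ^ (Y ∪ Y').card * (1 - p) ^ (Fintype.card E - (Y ∪ Y').card) *
        q ^ (κ - r (Y ∪ Y')) *
      (p ^ (Y ∩ Y').card * (1 - p) ^ (Fintype.card E - (Y ∩ Y').card) *
        q ^ (κ - r (Y ∩ Y')))
      = p ^ (Y.card + Y'.card) *
        (1 - p) ^ ((Fintype.card E - Y.card) + (Fintype.card E - Y'.card)) *
        q ^ ((κ - r (Y ∪ Y')) + (κ - r (Y ∩ Y'))) := by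
    rw [← hcard, ← h1pexp, pow_add, pow_add, pow_add]; ring
  rw [lhs_eq, rhs_eq]
  have hqpow : q ^ ((κ - r Y) + (κ - r Y')) ≤ q ^ ((κ - r (Y ∪ Y')) + (κ - r (Y ∩ Y'))) :=
    pow_le_pow_right₀ hq hqexp
  have hfac : (0:ℝ) ≤ p ^ (Y.card + Y'.card) *
      (1 - p) ^ ((Fintype.card E - Y.card) + (Fintype.card E - Y'.card)) :=
    mul_nonneg (pow_nonneg hple _) (pow_nonneg h1ple _)
  calc p ^ (Y.card + Y'.card) *
        (1 - p) ^ ((Fintype.card E - Y.card) + (Fintype.card E - Y'.card)) *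
        q ^ ((κ - r Y) + (κ - r Y'))
      ≤ p ^ (Y.card + Y'.card) *
        (1 - p) ^ ((Fintype.card E - Y.card) + (Fintype.card E - Y'.card)) *
        q ^ ((κ - r (Y ∪ Y')) + (κ - r (Y ∩ Y'))) := mul_le_mul_of_nonneg_left hqpow hfac
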